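/- Let a ∈ ℝ, λ > 1, and let f : ℝ → ℝ be continuously differentiable with f'(x₀) = −c for some x₀ ∈ ℝ and some c > 0. Let T_* = T_*(a,λ,c) be the shock time. If T ∈ (0,∞] and φ : ℝ × [0,T) → ℝ is a classical solution of the damped Burgers equation with initial data f, then T ≤ T_*. In particular, no global-in-time classical solution exists when the initial slope is somewhere negative. -/

import Mathlib

/-- `B(t) = ∫₀ᵗ A(s)⁻¹ ds = ∫₀ᵗ exp((a/(λ−1))·((1+s)^(1−λ) − 1)) ds`. -/
noncomputable def dampB (a lam t : ℝ) : ℝ :=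
  ∫ s in (0:ℝ)..t, Real.exp (a / (lam - 1) * ((1 + s) ^ (1 - lam) - 1))

/-- `φ : ℝ × I → ℝ` (written in curried form `φ x t`) is a classical (C¹) solution of the
damped Burgers equation `∂_t φ + φ ∂_x φ = −a·φ/(1+t)^λ` on the time interval `I`,
with initial data `f`; `φx` and `φt` are its (continuous) partial derivatives. -/
def IsDampedBurgersSol (a lam : ℝ) (f : ℝ → ℝ) (I : Set ℝ) (φ φx φt : ℝ → ℝ → ℝ) : Prop :=
  (∀ x : ℝ, φ x 0 = f x) ∧
  (∀ x : ℝ, ∀ t ∈ I, HasDerivAt (fun y => φ y t) (φx x t) x) ∧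
  (∀ x : ℝ, ∀ t ∈ I, HasDerivWithinAt (fun s => φ x s) (φt x t) I t) ∧
  ContinuousOn (fun p : ℝ × ℝ => φ p.1 p.2) (Set.univ ×ˢ I) ∧
  ContinuousOn (fun p : ℝ × ℝ => φx p.1 p.2) (Set.univ ×ˢ I) ∧
  ContinuousOn (fun p : ℝ × ℝ => φt p.1 p.2) (Set.univ ×ˢ I) ∧
  (∀ x : ℝ, ∀ t ∈ I, φt x t + φ x t * φx x t = -a * φ x t / (1 + t) ^ lam)

/- ### Auxiliary definitions and lemmas -/

noncomputable def dampG (a lam s : ℝ) : ℝ :=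
  Real.exp (a / (lam - 1) * ((1 + s) ^ (1 - lam) - 1))

noncomputable def dampA (a lam t : ℝ) : ℝ :=
  Real.exp (a / (lam - 1) * (1 - (1 + t) ^ (1 - lam)))

lemma dampB_eq (a lam t : ℝ) : dampB a lam t = ∫ s in (0:ℝ)..t, dampG a lam s := rfl

lemma dampG_pos (a lam s : ℝ) : 0 < dampG a lam s := Real.exp_pos _

lemma dampA_pos (a lam t : ℝ) : 0 < dampA a lam t := Real.exp_pos _

lemma dampA_mul_dampG (a lam t : ℝ) : dampA a lam t * dampG a lam t = 1 := by
  rw [dampA, dampG, ← Real.exp_add]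
  rw [show a / (lam - 1) * (1 - (1 + t) ^ (1 - lam)) +
      a / (lam - 1) * ((1 + t) ^ (1 - lam) - 1) = 0 by ring, Real.exp_zero]

lemma dampG_continuousAt {a lam t : ℝ} (ht : -1 < t) : ContinuousAt (dampG a lam) t := by
  have h1 : ContinuousAt (fun s : ℝ => (1 + s) ^ (1 - lam)) t := by
    have := Real.continuousAt_rpow_const (1 + t) (1 - lam) (Or.inl (by linarith))
    exact this.comp ((continuous_const.add continuous_id).continuousAt)
  exact Real.continuous_exp.continuousAt.comp
    ((continuousAt_const.mul (h1.sub continuousAt_const)))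

lemma dampA_continuousAt {a lam t : ℝ} (ht : -1 < t) : ContinuousAt (dampA a lam) t := by
  have h1 : ContinuousAt (fun s : ℝ => (1 + s) ^ (1 - lam)) t := by
    have := Real.continuousAt_rpow_const (1 + t) (1 - lam) (Or.inl (by linarith))
    exact this.comp ((continuous_const.add continuous_id).continuousAt)
  exact Real.continuous_exp.continuousAt.comp
    ((continuousAt_const.mul (continuousAt_const.sub h1)))

lemma dampG_intervalIntegrable {a lam u v : ℝ} (hu : 0 ≤ u) (hv : 0 ≤ v) :
    IntervalIntegrable (dampG a lam) MeasureTheory.volume u v := by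
  apply ContinuousOn.intervalIntegrable
  intro x hx
  have hx0 : 0 ≤ x := le_trans (le_min hu hv) hx.1
  exact (dampG_continuousAt (by linarith)).continuousWithinAt

lemma hasDerivAt_dampB {a lam t : ℝ} (ht : 0 ≤ t) :
    HasDerivAt (dampB a lam) (dampG a lam t) t := by
  have heq : dampB a lam = fun u => ∫ s in (0:ℝ)..u, dampG a lam s := rfl
  rw [heq]
  apply intervalIntegral.integral_hasDerivAt_right (dampG_intervalIntegrable le_rfl ht)
  · exact ContinuousAt.stronglyMeasurableAtFilter (isOpen_Ioi (a := (-1:ℝ)))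
      (fun x hx => dampG_continuousAt hx) t (by simpa using by linarith : t ∈ Set.Ioi (-1:ℝ))
  · exact dampG_continuousAt (by linarith)

lemma dampB_zero (a lam : ℝ) : dampB a lam 0 = 0 := by
  simp [dampB]

lemma dampB_strictMono {a lam u v : ℝ} (hu : 0 ≤ u) (huv : u < v) :
    dampB a lam u < dampB a lam v := by
  have hv : 0 ≤ v := le_trans hu huv.le
  have hsub : dampB a lam v - dampB a lam u = ∫ s in u..v, dampG a lam s := by
    rw [dampB_eq, dampB_eq]
    exact intervalIntegral.integral_interval_sub_left
      (dampG_intervalIntegrable le_rfl hv) (dampG_intervalIntegrable le_rfl hu)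
  have hpos : 0 < ∫ s in u..v, dampG a lam s := by
    apply intervalIntegral.intervalIntegral_pos_of_pos_on
      (dampG_intervalIntegrable hu hv) (fun x _ => dampG_pos a lam x) huv
  linarith

lemma dampB_continuousOn {a lam : ℝ} {s : Set ℝ} (hs : s ⊆ Set.Ici 0) :
    ContinuousOn (dampB a lam) s := fun t ht =>
  ((hasDerivAt_dampB (hs ht)).continuousAt).continuousWithinAt

lemma hasDerivAt_dampA {a lam t : ℝ} (hlam : 1 < lam) (ht : -1 < t) :
    HasDerivAt (dampA a lam) (dampA a lam t * (a / (1 + t) ^ lam)) t := by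
  have h0 : (0:ℝ) < 1 + t := by linarith
  have h1 : HasDerivAt (fun s : ℝ => 1 + s) 1 t := by
    simpa using (hasDerivAt_id t).const_add 1
  have h2 : HasDerivAt (fun s : ℝ => (1 + s) ^ (1 - lam))
      (1 * (1 - lam) * (1 + t) ^ (1 - lam - 1)) t :=
    h1.rpow_const (Or.inl h0.ne')
  have h3 := ((h2.const_sub 1).const_mul (a / (lam - 1))).exp
  convert h3 using 1
  · rfl
  have he : (1:ℝ) - lam - 1 = -lam := by ring
  have hl : lam - 1 ≠ 0 := by linarith
  have hP : (1 + t) ^ lam ≠ 0 := (Real.rpow_pos_of_pos h0 lam).ne'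
  have hs : a / (lam - 1) * -(1 * (1 - lam) * ((1 + t) ^ lam)⁻¹) = a / (1 + t) ^ lam := by
    field_simp
    ring
  rw [he, Real.rpow_neg h0.le, hs]
  rfl

/-- Chain rule along a curve, using only continuity of the partial `x`-derivative. -/
lemma chain_rule {φ φx φt : ℝ → ℝ → ℝ} {I : Set ℝ}
    (hdx : ∀ x : ℝ, ∀ t ∈ I, HasDerivAt (fun y => φ y t) (φx x t) x)
    (hdt : ∀ x : ℝ, ∀ t ∈ I, HasDerivWithinAt (fun s => φ x s) (φt x t) I t)
    (hcx : ContinuousOn (fun p : ℝ × ℝ => φx p.1 p.2) (Set.univ ×ˢ I))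
    {γ : ℝ → ℝ} {γ' t₀ : ℝ} (ht₀ : t₀ ∈ I)
    (hγ : HasDerivWithinAt γ γ' I t₀) :
    HasDerivWithinAt (fun t => φ (γ t) t)
      (φx (γ t₀) t₀ * γ' + φt (γ t₀) t₀) I t₀ := by
  rw [hasDerivWithinAt_iff_isLittleO]
  have hE3 := hasDerivWithinAt_iff_isLittleO.mp (hdt (γ t₀) t₀ ht₀)
  have hE2 := (hasDerivWithinAt_iff_isLittleO.mp hγ).const_mul_left (φx (γ t₀) t₀)
  have hE1 : (fun t => φ (γ t) t - φ (γ t₀) t - φx (γ t₀) t₀ * (γ t - γ t₀))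
      =o[nhdsWithin t₀ I] fun t => t - t₀ := by
    rw [Asymptotics.isLittleO_iff]
    intro c hc
    obtain ⟨C, hC⟩ := Asymptotics.isBigO_iff.mp hγ.isBigO_sub
    set C' := max C 1 with hC'def
    have hC'1 : (1:ℝ) ≤ C' := le_max_right _ _
    have hC'0 : (0:ℝ) < C' := lt_of_lt_of_le one_pos hC'1
    have hε : 0 < c / C' := div_pos hc hC'0
    have hcx0 : ContinuousWithinAt (fun p : ℝ × ℝ => φx p.1 p.2)
        (Set.univ ×ˢ I) (γ t₀, t₀) := hcx _ (by simp [ht₀])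
    rw [Metric.continuousWithinAt_iff] at hcx0
    obtain ⟨δ, hδ, hball⟩ := hcx0 (c / C') hε
    have h1 : ∀ᶠ t in nhdsWithin t₀ I, t ∈ I := self_mem_nhdsWithin
    have h2 : ∀ᶠ t in nhdsWithin t₀ I, dist t t₀ < δ :=
      eventually_nhdsWithin_of_eventually_nhds (Metric.eventually_nhds_iff.mpr ⟨δ, hδ, fun y h => h⟩)
    have h3 : ∀ᶠ t in nhdsWithin t₀ I, dist (γ t) (γ t₀) < δ / 2 := by
      have := hγ.continuousWithinAt
      exact this (Metric.ball_mem_nhds _ (by linarith))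
    filter_upwards [h1, h2, h3, Filter.eventually_map.mp (Filter.prod_pure ▸ hC)] with t htI ht2 ht3 htC
    have hγtC : ‖γ t - γ t₀‖ ≤ C' * ‖t - t₀‖ := by
      calc ‖γ t - γ t₀‖ ≤ C * ‖t - t₀‖ := htC
        _ ≤ C' * ‖t - t₀‖ := by
            apply mul_le_mul_of_nonneg_right (le_max_left _ _) (norm_nonneg _)
    -- MVT bound on the ball around γ t₀
    set c0 := φx (γ t₀) t₀ with hc0
    have hmvt : ‖(φ (γ t) t - c0 * γ t) - (φ (γ t₀) t - c0 * γ t₀)‖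
        ≤ (c / C') * ‖γ t - γ t₀‖ := by
      apply Convex.norm_image_sub_le_of_norm_hasDerivWithin_le
        (f := fun y => φ y t - c0 * y) (f' := fun y => φx y t - c0)
        (s := Metric.ball (γ t₀) (δ / 2))
        (fun y hy => ?_) (fun y hy => ?_) (convex_ball _ _)
        (Metric.mem_ball_self (by linarith)) ht3
      · have : HasDerivAt (fun y => φ y t - c0 * y) (φx y t - c0) y := by
          simpa using (hdx y t htI).fun_sub ((hasDerivAt_id y).const_mul c0)
        exact this.hasDerivWithinAt
      · have hyd : dist ((y, t) : ℝ × ℝ) (γ t₀, t₀) < δ := by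
          rw [Prod.dist_eq]
          exact max_lt (lt_of_lt_of_le (Metric.mem_ball.mp hy) (by linarith)) ht2
        have := hball (by simp [htI] : ((y, t) : ℝ × ℝ) ∈ Set.univ ×ˢ I) hyd
        rw [Real.dist_eq] at this
        exact le_of_lt this
    calc ‖φ (γ t) t - φ (γ t₀) t - c0 * (γ t - γ t₀)‖
        = ‖(φ (γ t) t - c0 * γ t) - (φ (γ t₀) t - c0 * γ t₀)‖ := by ring_nf
      _ ≤ (c / C') * ‖γ t - γ t₀‖ := hmvt
      _ ≤ (c / C') * (C' * ‖t - t₀‖) := by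
          apply mul_le_mul_of_nonneg_left hγtC (le_of_lt hε)
      _ = c * ‖t - t₀‖ := by field_simp
  have hsum := (hE1.add hE2).add hE3
  have heq : (fun t => (φ (γ t) t - φ (γ t₀) t - φx (γ t₀) t₀ * (γ t - γ t₀)) +
      φx (γ t₀) t₀ * (γ t - γ t₀ - (t - t₀) • γ') +
      (φ (γ t₀) t - φ (γ t₀) t₀ - (t - t₀) • φt (γ t₀) t₀)) =
      fun t => φ (γ t) t - φ (γ t₀) t₀ -
        (t - t₀) • (φx (γ t₀) t₀ * γ' + φt (γ t₀) t₀) := by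
    funext t
    simp only [smul_eq_mul]
    ring
  rw [heq] at hsum
  exact hsum

/-- Along the explicit characteristic `t ↦ y + f(y)·B(t)` the solution equals `f(y)/A(t)`. -/
lemma characteristic_eq {a lam T : ℝ} (hlam : 1 < lam)
    {f : ℝ → ℝ} {φ φx φt : ℝ → ℝ → ℝ}
    (hsol : IsDampedBurgersSol a lam f (Set.Ico 0 T) φ φx φt)
    (y : ℝ) {s : ℝ} (hs : s ∈ Set.Ico 0 T) :
    φ (y + f y * dampB a lam s) s * dampA a lam s = f y := by
  obtain ⟨hinit, hdx, hdt, hφc, hφxc, hφtc, hpde⟩ := hsol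
  set I := Set.Ico 0 T with hI
  set γ : ℝ → ℝ := fun t => y + f y * dampB a lam t with hγdef
  set h : ℝ → ℝ := fun t => φ (γ t) t * dampA a lam t - f y with hhdef
  -- continuity of t ↦ φx (γ t) t on Icc 0 s
  have hsub : Set.Icc 0 s ⊆ I := fun t ht => ⟨ht.1, lt_of_le_of_lt ht.2 hs.2⟩
  have hγcont : ContinuousOn γ (Set.Icc 0 s) :=
    continuousOn_const.add (continuousOn_const.mul
      (dampB_continuousOn (fun t ht => ht.1)))
  have hmap : Set.MapsTo (fun t => ((γ t, t) : ℝ × ℝ)) (Set.Icc 0 s) (Set.univ ×ˢ I) :=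
    fun t ht => by simp [hsub ht]
  have hγxcont : ContinuousOn (fun t => φx (γ t) t) (Set.Icc 0 s) :=
    ContinuousOn.comp hφxc (hγcont.prodMk continuousOn_id) hmap
  obtain ⟨K, hK⟩ := (isCompact_Icc).exists_bound_of_continuousOn hγxcont
  -- continuity of h
  have hAcont : ContinuousOn (dampA a lam) (Set.Icc 0 s) := fun t ht =>
    (dampA_continuousAt (by linarith [ht.1])).continuousWithinAt
  have hhcont : ContinuousOn h (Set.Icc 0 s) :=
    ((ContinuousOn.comp hφc (hγcont.prodMk continuousOn_id) hmap).mul hAcont).sub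
      continuousOn_const
  -- derivative of h
  have hderiv : ∀ t ∈ Set.Ico 0 s,
      HasDerivWithinAt h (-(φx (γ t) t) * h t) (Set.Ici t) t := by
    intro t ht
    have htI : t ∈ I := ⟨ht.1, lt_trans ht.2 hs.2⟩
    have hγd : HasDerivWithinAt γ (f y * dampG a lam t) I t :=
      (((hasDerivAt_dampB ht.1).const_mul (f y)).const_add y).hasDerivWithinAt
    have hq := chain_rule hdx hdt hφxc htI hγd
    have hAd : HasDerivAt (dampA a lam) (dampA a lam t * (a / (1 + t) ^ lam)) t :=
      hasDerivAt_dampA hlam (by linarith [ht.1])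
    have hprod := hq.mul hAd.hasDerivWithinAt
    have hh : HasDerivWithinAt h
        ((φx (γ t) t * (f y * dampG a lam t) + φt (γ t) t) * dampA a lam t +
          φ (γ t) t * (dampA a lam t * (a / (1 + t) ^ lam))) I t := hprod.sub_const (f y)
    have hval : (φx (γ t) t * (f y * dampG a lam t) + φt (γ t) t) * dampA a lam t +
        φ (γ t) t * (dampA a lam t * (a / (1 + t) ^ lam)) = -(φx (γ t) t) * h t := by
      have hpde' := hpde (γ t) t htI
      have hga := dampA_mul_dampG a lam t
      simp only [hhdef]
      linear_combination dampA a lam t * hpde' + (f y * φx (γ t) t) * hga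
    rw [hval] at hh
    apply hh.mono_of_mem_nhdsWithin
    rw [mem_nhdsWithin]
    exact ⟨Set.Iio T, isOpen_Iio, lt_trans ht.2 hs.2, fun x hx =>
      ⟨le_trans ht.1 hx.2, hx.1⟩⟩
  -- Gronwall
  have hK0 : 0 ≤ K := le_trans (norm_nonneg _) (hK 0 ⟨le_rfl, hs.1⟩)
  have h0 : ‖h 0‖ ≤ 0 := by
    have : h 0 = 0 := by
      simp only [hhdef, hγdef, dampB_zero, mul_zero, add_zero, dampA]
      rw [Real.one_rpow, sub_self, mul_zero, Real.exp_zero, mul_one, hinit, sub_self]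
    simp [this]
  have hbound : ∀ t ∈ Set.Ico 0 s, ‖-(φx (γ t) t) * h t‖ ≤ K * ‖h t‖ + 0 := by
    intro t ht
    rw [add_zero, norm_mul, norm_neg]
    exact mul_le_mul_of_nonneg_right (hK t ⟨ht.1, ht.2.le⟩) (norm_nonneg _)
  have := norm_le_gronwallBound_of_norm_deriv_right_le hhcont hderiv h0 hbound s
    ⟨hs.1, le_rfl⟩
  rw [gronwallBound_ε0_δ0] at this
  have hh0 : h s = 0 := norm_le_zero_iff.mp this
  have : φ (γ s) s * dampA a lam s - f y = 0 := hh0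
  linarith [this]

/-- If the initial slope equals `−c < 0` somewhere, then any classical solution of the
damped Burgers equation on `ℝ × [0,T)` satisfies `T ≤ T_*(a,λ,c)`; in particular no
global-in-time classical solution exists. -/
theorem stmt9 (a lam c Tstar : ℝ) (hlam : 1 < lam) (hc : 0 < c)
    (f : ℝ → ℝ) (hf : ContDiff ℝ 1 f) (x₀ : ℝ) (hx₀ : deriv f x₀ = -c)
    (hTs : 0 < Tstar) (hBTs : dampB a lam Tstar = 1 / c) :
    (∀ T : ℝ, 0 < T → ∀ φ φx φt : ℝ → ℝ → ℝ,
      IsDampedBurgersSol a lam f (Set.Ico 0 T) φ φx φt → T ≤ Tstar) ∧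
    (∀ φ φx φt : ℝ → ℝ → ℝ, ¬ IsDampedBurgersSol a lam f (Set.Ici 0) φ φx φt) := by
  have main : ∀ T : ℝ, 0 < T → ∀ φ φx φt : ℝ → ℝ → ℝ,
      IsDampedBurgersSol a lam f (Set.Ico 0 T) φ φx φt → T ≤ Tstar := by
    intro T hT φ φx φt hsol
    by_contra hlt
    push_neg at hlt
    set t₁ := (Tstar + T) / 2 with ht₁def
    have ht₁T : t₁ < T := by rw [ht₁def]; linarith
    have ht₁Ts : Tstar < t₁ := by rw [ht₁def]; linarith
    have ht₁0 : 0 < t₁ := lt_trans hTs ht₁Ts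
    have hB1 : 1 / c < dampB a lam t₁ := by
      rw [← hBTs]; exact dampB_strictMono hTs.le ht₁Ts
    have hBpos : 0 < dampB a lam t₁ := lt_trans (by positivity) hB1
    set m := (1 / dampB a lam t₁ + c) / 2 with hmdef
    have hm1 : 1 / dampB a lam t₁ < c := by
      rw [div_lt_iff₀ hBpos]
      rw [div_lt_iff₀ hc] at hB1
      linarith [hB1]
    have hm0 : 0 < m := by rw [hmdef]; positivity
    have hmc : m < c := by rw [hmdef]; linarith
    have hmB : 1 / m < dampB a lam t₁ := by
      rw [div_lt_iff₀ hm0, hmdef]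
      have : 1 / dampB a lam t₁ * dampB a lam t₁ = 1 := by field_simp
      nlinarith [hB1, hBpos]
    -- find δ with deriv f < -m on [x₀ - δ, x₀ + δ]
    have hdc : ContinuousAt (deriv f) x₀ :=
      (hf.continuous_deriv le_rfl).continuousAt
    rw [Metric.continuousAt_iff] at hdc
    obtain ⟨δ₀, hδ₀, hd⟩ := hdc (c - m) (by linarith)
    set δ := δ₀ / 2 with hδdef
    have hδpos : 0 < δ := by rw [hδdef]; linarith
    have hdm : ∀ x ∈ Set.Icc (x₀ - δ) (x₀ + δ), deriv f x < -m := by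
      intro x hx
      have hxd : dist x x₀ < δ₀ := by
        rw [Real.dist_eq, abs_lt]
        constructor <;> [linarith [hx.1]; linarith [hx.2]]
      have := hd hxd
      rw [Real.dist_eq, hx₀, abs_lt] at this
      linarith [this.2]
    set y₁ := x₀ - δ with hy₁
    set y₂ := x₀ + δ with hy₂
    have hy12 : y₁ < y₂ := by rw [hy₁, hy₂]; linarith
    -- MVT
    have hfd : ∀ x : ℝ, HasDerivAt f (deriv f x) x := fun x =>
      ((hf.differentiable one_ne_zero) x).hasDerivAt
    obtain ⟨ξ, hξ, hξeq⟩ := exists_hasDerivAt_eq_slope f (deriv f) hy12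
      ((hf.continuous).continuousOn) (fun x _ => hfd x)
    have hξm : deriv f ξ < -m := hdm ξ ⟨hξ.1.le, hξ.2.le⟩
    have hslope : (f y₂ - f y₁) / (y₂ - y₁) < -m := hξeq ▸ hξm
    have hy21 : y₂ - y₁ = 2 * δ := by rw [hy₁, hy₂]; ring
    have hD : 2 * δ * m < f y₁ - f y₂ := by
      rw [div_lt_iff₀ (by linarith : (0:ℝ) < y₂ - y₁)] at hslope
      nlinarith [hslope]
    have hDpos : 0 < f y₁ - f y₂ := lt_trans (by positivity) hD
    set r := (y₂ - y₁) / (f y₁ - f y₂) with hrdef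
    have hrpos : 0 < r := div_pos (by linarith) hDpos
    have hrm : r < 1 / m := by
      rw [hrdef, div_lt_div_iff₀ hDpos hm0, hy21]
      nlinarith [hD]
    have hrB : r < dampB a lam t₁ := lt_trans hrm hmB
    -- IVT for B
    have hBc : ContinuousOn (dampB a lam) (Set.Icc 0 t₁) :=
      dampB_continuousOn (fun t ht => ht.1)
    have hIVT := intermediate_value_Icc ht₁0.le hBc
    have hrmem : r ∈ Set.Icc (dampB a lam 0) (dampB a lam t₁) := by
      rw [dampB_zero]
      exact ⟨hrpos.le, hrB.le⟩
    obtain ⟨s, hsmem, hsB⟩ := hIVT hrmem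
    have hsI : s ∈ Set.Ico 0 T := ⟨hsmem.1, lt_of_le_of_lt hsmem.2 ht₁T⟩
    -- the two characteristics cross at time s
    have hcross : y₁ + f y₁ * dampB a lam s = y₂ + f y₂ * dampB a lam s := by
      rw [hsB, hrdef]
      field_simp
      ring
    have h1 := characteristic_eq hlam hsol y₁ hsI
    have h2 := characteristic_eq hlam hsol y₂ hsI
    rw [hcross] at h1
    rw [h1] at h2
    linarith [h2, hDpos]
  refine ⟨main, ?_⟩
  intro φ φx φt hsol
  obtain ⟨hinit, hdx, hdt, hφc, hφxc, hφtc, hpde⟩ := hsol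
  have hsub : Set.Ico (0:ℝ) (Tstar + 1) ⊆ Set.Ici 0 := fun t ht => ht.1
  have hsub2 : (Set.univ ×ˢ Set.Ico (0:ℝ) (Tstar + 1) : Set (ℝ × ℝ)) ⊆
      Set.univ ×ˢ Set.Ici 0 := fun p hp => ⟨trivial, hsub hp.2⟩
  have hrestrict : IsDampedBurgersSol a lam f (Set.Ico 0 (Tstar + 1)) φ φx φt := by
    refine ⟨hinit, fun x t ht => hdx x t (hsub ht),
      fun x t ht => (hdt x t (hsub ht)).mono hsub,
      hφc.mono hsub2, hφxc.mono hsub2, hφtc.mono hsub2,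
      fun x t ht => hpde x t (hsub ht)⟩
  have := main (Tstar + 1) (by linarith) φ φx φt hrestrict
  linarith
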